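/- For every relational vocabulary σ and every integer k ≥ 1, the triple (E_k, ε, (·)*) is a comonad in Kleisli form on the category of σ-structures and homomorphisms: for every σ-structure 𝒜 the counit ε_𝒜 : E_k 𝒜 → 𝒜 is a homomorphism; for every homomorphism f : E_k 𝒜 → ℬ the coextension f* : E_k 𝒜 → E_k ℬ is a homomorphism; and the equations (ε_𝒜)* = id_{E_k 𝒜}, ε_ℬ ∘ f* = f, and (g ∘ f*)* = g* ∘ f* hold for all homomorphisms f : E_k 𝒜 → ℬ and g : E_k ℬ → 𝒞. -/

import Mathlib

/-- A relational vocabulary: a type of relation symbols with arities. -/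
structure RelVocab : Type 1 where
  Rel : Type
  ar : Rel → ℕ

/-- A structure for a relational vocabulary. -/
structure RelStruct (σ : RelVocab) : Type 1 where
  carrier : Type
  rel : ∀ R : σ.Rel, (Fin (σ.ar R) → carrier) → Prop

/-- Homomorphisms of relational structures. -/
def IsHom {σ : RelVocab} (𝒜 ℬ : RelStruct σ) (h : 𝒜.carrier → ℬ.carrier) : Prop :=
  ∀ (R : σ.Rel) (v : Fin (σ.ar R) → 𝒜.carrier), 𝒜.rel R v → ℬ.rel R (fun i => h (v i))

/-- Nonempty sequences over `A` of length at most `k`: the universe of `E_k 𝒜`. -/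
def EkC (k : ℕ) (A : Type) : Type :=
  {l : List A // l ≠ [] ∧ l.length ≤ k}

/-- The counit: the last element of a sequence. -/
def eps {k : ℕ} {A : Type} (s : EkC k A) : A :=
  s.1.getLast s.2.1

/-- Comparability in the prefix order. -/
def Cmp {A : Type} (s t : List A) : Prop :=
  s <+: t ∨ t <+: s

/-- The Ehrenfeucht–Fraïssé comonad `E_k` on structures. -/
def Ek {σ : RelVocab} (k : ℕ) (𝒜 : RelStruct σ) : RelStruct σ where
  carrier := EkC k 𝒜.carrier
  rel R v := (∀ i j, Cmp (v i).1 (v j).1) ∧ 𝒜.rel R (fun i => eps (v i))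

/-- The prefix of `s` of length `i+1`. -/
def prefAt {k : ℕ} {A : Type} (s : EkC k A) (i : Fin s.1.length) : EkC k A :=
  ⟨s.1.take (i + 1), by
    constructor
    · apply List.ne_nil_of_length_pos
      rw [List.length_take]
      exact lt_min (Nat.succ_pos _) (Nat.lt_of_le_of_lt (Nat.zero_le _) i.2)
    · rw [List.length_take]
      exact le_trans (min_le_right _ _) s.2.2⟩

/-- The Kleisli coextension `f* [a_1,…,a_j] = [f[a_1],…,f[a_1,…,a_j]]`. -/
def coext {k : ℕ} {A B : Type} (f : EkC k A → B) (s : EkC k A) : EkC k B :=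
  ⟨List.ofFn (fun i : Fin s.1.length => f (prefAt s i)), by
    constructor
    · apply List.ne_nil_of_length_pos
      rw [List.length_ofFn]
      exact List.length_pos_iff.mpr s.2.1
    · rw [List.length_ofFn]
      exact s.2.2⟩

section aux
variable {k : ℕ} {A B : Type}

lemma take_eq_of_prefix {s t : List A} (h : s <+: t) {n : ℕ} (hn : n ≤ s.length) :
    t.take n = s.take n := by
  obtain ⟨r, rfl⟩ := h
  exact List.take_append_of_le_length hn

lemma prefAt_congr {s t : EkC k A} (h : s.1 <+: t.1) (i : Fin s.1.length)
    (i' : Fin t.1.length) (hii : (i : ℕ) = (i' : ℕ)) : prefAt t i' = prefAt s i := by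
  apply Subtype.ext
  show t.1.take (i' + 1) = s.1.take (i + 1)
  rw [← hii]
  exact take_eq_of_prefix h i.2

lemma coext_length (f : EkC k A → B) (s : EkC k A) :
    (coext f s).1.length = s.1.length := by
  simp [coext]

lemma eps_prefAt (s : EkC k A) (i : Fin s.1.length) :
    eps (prefAt s i) = s.1.get i := by
  show (s.1.take (i + 1)).getLast _ = _
  erw [List.getLast_eq_getElem]
  simp [List.length_take, Nat.min_eq_left (Nat.succ_le_of_lt i.2)]

lemma prefAt_last (s : EkC k A) (h : s.1.length - 1 < s.1.length) :
    prefAt s ⟨s.1.length - 1, h⟩ = s := by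
  apply Subtype.ext
  show s.1.take (s.1.length - 1 + 1) = s.1
  have h2 : s.1.length - 1 + 1 = s.1.length := by
    have := List.length_pos_iff.mpr s.2.1; omega
  rw [h2, List.take_length]

lemma eps_coext (f : EkC k A → B) (s : EkC k A) : eps (coext f s) = f s := by
  have h1 := List.getLast_ofFn (f := fun i : Fin s.1.length => f (prefAt s i)) (coext f s).2.1
  exact h1.trans (congrArg f (prefAt_last s _))

lemma coext_prefix (f : EkC k A → B) {s t : EkC k A} (h : s.1 <+: t.1) :
    (coext f s).1 <+: (coext f t).1 := by
  rw [List.prefix_iff_eq_take]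
  apply List.ext_getElem
  · simp [coext, Nat.min_eq_left h.length_le]
  · intro i h1 h2
    have hi : i < s.1.length := by simpa [coext] using h1
    have hi' : i < t.1.length := lt_of_lt_of_le hi h.length_le
    simp only [coext, List.getElem_take, List.getElem_ofFn]
    congr 1
    exact (prefAt_congr h ⟨i, hi⟩ ⟨i, hi'⟩ rfl).symm

lemma prefAt_coext (f : EkC k A → B) (s : EkC k A) (i : Fin (coext f s).1.length)
    (i' : Fin s.1.length) (hii : (i : ℕ) = (i' : ℕ)) :
    prefAt (coext f s) i = coext f (prefAt s i') := by
  apply Subtype.ext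
  apply List.ext_getElem
  · simp only [prefAt, coext, List.length_take, List.length_ofFn, hii]
  · intro n h1 h2
    have hn' : n < (prefAt s i').1.length := by simpa [coext] using h2
    have hns : n < s.1.length := by
      simp only [prefAt, List.length_take] at hn'
      omega
    have hle : n + 1 ≤ (i' : ℕ) + 1 := by
      simp only [prefAt, List.length_take] at hn'; omega
    simp only [prefAt, coext, List.getElem_take, List.getElem_ofFn]
    congr 1
    apply Subtype.ext
    show s.1.take (n + 1) = (s.1.take ((i' : ℕ) + 1)).take (n + 1)
    rw [List.take_take, Nat.min_eq_left hle]

lemma coext_coext {C : Type} (f : EkC k A → B) (g : EkC k B → C) (s : EkC k A) :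
    coext (fun s => g (coext f s)) s = coext g (coext f s) := by
  apply Subtype.ext
  apply List.ext_getElem
  · simp [coext]
  · intro n h1 h2
    have hns : n < s.1.length := by simpa [coext] using h1
    have hnc : n < (coext f s).1.length := by simpa [coext] using hns
    simp only [coext, List.getElem_ofFn]
    show g (coext f (prefAt s _)) = g (prefAt _ _)
    congr 1
    exact (prefAt_coext f s ⟨n, hnc⟩ ⟨n, hns⟩ rfl).symm

end aux

theorem stmt0 (σ : RelVocab) (k : ℕ) (hk : 1 ≤ k) :
    (∀ 𝒜 : RelStruct σ, IsHom (Ek k 𝒜) 𝒜 eps) ∧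
    (∀ (𝒜 ℬ : RelStruct σ) (f : EkC k 𝒜.carrier → ℬ.carrier),
      IsHom (Ek k 𝒜) ℬ f → IsHom (Ek k 𝒜) (Ek k ℬ) (coext f)) ∧
    (∀ 𝒜 : RelStruct σ, coext (eps : EkC k 𝒜.carrier → 𝒜.carrier) = id) ∧
    (∀ (𝒜 ℬ : RelStruct σ) (f : EkC k 𝒜.carrier → ℬ.carrier), IsHom (Ek k 𝒜) ℬ f →
      (fun s => eps (coext f s)) = f) ∧
    (∀ (𝒜 ℬ 𝒞 : RelStruct σ) (f : EkC k 𝒜.carrier → ℬ.carrier)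
      (g : EkC k ℬ.carrier → 𝒞.carrier), IsHom (Ek k 𝒜) ℬ f → IsHom (Ek k ℬ) 𝒞 g →
      coext (fun s => g (coext f s)) = fun s => coext g (coext f s)) := by
  refine ⟨?_, ?_, ?_, ?_, ?_⟩
  · intro 𝒜 R v hv
    exact hv.2
  · intro 𝒜 ℬ f hf R v hv
    constructor
    · intro i j
      rcases hv.1 i j with h | h
      · exact Or.inl (coext_prefix f h)
      · exact Or.inr (coext_prefix f h)
    · have h : (fun i => eps (coext f (v i))) = fun i => f (v i) := by
        funext i; exact eps_coext f (v i)
      rw [h]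
      exact hf R v hv
  · intro 𝒜
    funext s
    apply Subtype.ext
    have h : (fun i : Fin s.1.length => eps (prefAt s i)) =
        fun i : Fin s.1.length => s.1[(i : ℕ)] := by
      funext i; exact eps_prefAt s i
    change List.ofFn (fun i : Fin s.1.length => eps (prefAt s i)) = s.1
    rw [h, List.ofFn_getElem]
  · intro 𝒜 ℬ f hf
    funext s
    exact eps_coext f s
  · intro 𝒜 ℬ 𝒞 f g hf hg
    funext s
    exact coext_coext f g s
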